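/- Let μ be a Borel probability measure on ℝ with finite second moment and mean m. Let p be a Markov transition kernel on ℝ satisfying ∫ y p(x,dy) = x + m and ∫ y² p(x,dy) = x² + 2 m x + m₂(μ) for every x ∈ ℝ, and let (X_n)_{n≥1} be a Markov chain with X_1 distributed as μ and with the conditional distribution of X_n given X_1, …, X_{n-1} equal to p(X_{n-1},·) for each n ≥ 2. Then X_n/n converges to m in probability as n → ∞. -/

import Mathlib

open MeasureTheory ProbabilityTheory Filter
open scoped ENNReal Topology NNReal

/-- Let `μ` be a Borel probability measure on `ℝ` with finite second
moment and mean `m`, and let `p` be a Markov transition kernel with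
`∫ y p(x,dy) = x + m` and `∫ y² p(x,dy) = x² + 2mx + m₂(μ)` for every `x`. If
`(X_n)_{n≥1}` is a Markov chain with `X_1 ∼ μ` and the conditional distribution of
`X_n` given `X_1, …, X_{n-1}` equal to `p(X_{n-1}, ·)` for `n ≥ 2`, then `X_n / n`
converges to `m` in probability. -/
theorem monotone_weak_lln_iid
    {Ω : Type*} {mΩ : MeasurableSpace Ω} (P : Measure Ω) [IsProbabilityMeasure P]
    (μ : Measure ℝ) [IsProbabilityMeasure μ]
    (hμ2 : Integrable (fun t : ℝ => t ^ 2) μ)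
    (m m₂ : ℝ) (hm : m = ∫ t : ℝ, t ∂μ) (hm₂ : m₂ = ∫ t : ℝ, t ^ 2 ∂μ)
    (p : Kernel ℝ ℝ) [IsMarkovKernel p]
    (hpint : ∀ x : ℝ, Integrable (fun y : ℝ => y ^ 2) (p x))
    (hpmean : ∀ x : ℝ, (∫ y : ℝ, y ∂(p x)) = x + m)
    (hpsq : ∀ x : ℝ, (∫ y : ℝ, y ^ 2 ∂(p x)) = x ^ 2 + 2 * m * x + m₂)
    (X : ℕ → Ω → ℝ) (hXmeas : ∀ n, Measurable (X n))
    (hX1 : P.map (X 1) = μ)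
    (hcond : ∀ n, 2 ≤ n → ∀ B : Set ℝ, MeasurableSet B →
      P[(X n ⁻¹' B).indicator (fun _ => (1 : ℝ)) |
          ⨆ i ∈ Set.Icc 1 (n - 1), MeasurableSpace.comap (X i) Real.measurableSpace]
        =ᵐ[P] fun ω => (p (X (n - 1) ω) B).toReal) :
    TendstoInMeasure P (fun n ω => X n ω / n) atTop (fun _ => m) := by
  -- integrability of the first moment under `p x`
  have habs : ∀ y : ℝ, ‖y‖ ≤ ‖1 + y ^ 2‖ := by
    intro y
    rw [Real.norm_eq_abs, Real.norm_eq_abs,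
      abs_of_nonneg (show (0:ℝ) ≤ 1 + y ^ 2 by positivity)]
    nlinarith [sq_nonneg (|y| - 1), sq_abs y, abs_nonneg y]
  have hpy : ∀ x : ℝ, Integrable (fun y : ℝ => y) (p x) := by
    intro x
    exact ((integrable_const 1).add (hpint x)).mono
      measurable_id.aestronglyMeasurable (Filter.Eventually.of_forall habs)
  have hμ1 : Integrable (fun t : ℝ => t) μ :=
    ((integrable_const 1).add hμ2).mono
      measurable_id.aestronglyMeasurable (Filter.Eventually.of_forall habs)
  have hsq_eq : ∀ c : ℝ, (fun y : ℝ => (y - c) ^ 2)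
      = fun y : ℝ => (y ^ 2 + (-(2 * c)) * y) + c ^ 2 := by
    intro c; funext y; ring
  have hpintc : ∀ x c : ℝ, Integrable (fun y : ℝ => (y - c) ^ 2) (p x) := by
    intro x c
    rw [hsq_eq c]
    exact ((hpint x).add ((hpy x).const_mul _)).add (integrable_const _)
  have hμintc : ∀ c : ℝ, Integrable (fun t : ℝ => (t - c) ^ 2) μ := by
    intro c
    rw [hsq_eq c]
    exact (hμ2.add (hμ1.const_mul _)).add (integrable_const _)
  have hpsq' : ∀ x c : ℝ, (∫ y : ℝ, (y - c) ^ 2 ∂(p x))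
      = x ^ 2 + 2 * m * x + m₂ + (-(2 * c)) * (x + m) + c ^ 2 := by
    intro x c
    have h1 : Integrable (fun y : ℝ => y ^ 2 + (-(2 * c)) * y) (p x) :=
      (hpint x).add ((hpy x).const_mul _)
    have h2 : Integrable (fun y : ℝ => (-(2 * c)) * y) (p x) := (hpy x).const_mul _
    rw [hsq_eq c, integral_add h1 (integrable_const _), integral_add (hpint x) h2,
      integral_const_mul, hpsq, hpmean, integral_const]
    simp [measure_univ]
  have hμsq' : (∫ t : ℝ, (t - m) ^ 2 ∂μ) = m₂ - m ^ 2 := by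
    have h1 : Integrable (fun t : ℝ => t ^ 2 + (-(2 * m)) * t) μ :=
      hμ2.add (hμ1.const_mul _)
    have h2 : Integrable (fun t : ℝ => (-(2 * m)) * t) μ := hμ1.const_mul _
    rw [hsq_eq m, integral_add h1 (integrable_const _), integral_add hμ2 h2,
      integral_const_mul, ← hm₂, ← hm, integral_const]
    simp [measure_univ]
    ring
  set L : ℝ := m₂ - m ^ 2 with hLdef
  have hL : 0 ≤ L := by
    rw [← hμsq']
    exact integral_nonneg fun t => sq_nonneg _
  -- the law recursion
  have hbind : ∀ n : ℕ, 1 ≤ n → P.map (X (n + 1)) = (P.map (X n)).bind (fun x => p x) := by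
    intro n hn
    have h2 : 2 ≤ n + 1 := by omega
    have hBm : ∀ i : ℕ, MeasurableSpace.comap (X i) Real.measurableSpace ≤ mΩ :=
      fun i => (hXmeas i).comap_le
    have hle : (⨆ i ∈ Set.Icc 1 (n + 1 - 1), MeasurableSpace.comap (X i) Real.measurableSpace)
        ≤ mΩ := by
      exact iSup₂_le fun i _ => hBm i
    haveI : SigmaFinite (P.trim hle) := inferInstance
    ext B hB
    have hcn := hcond (n + 1) h2 B hB
    have hXB : MeasurableSet (X (n + 1) ⁻¹' B) := (hXmeas (n + 1)) hB
    have hint : Integrable ((X (n + 1) ⁻¹' B).indicator fun _ => (1 : ℝ)) P :=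
      (integrable_const 1).indicator hXB
    have e1 : ∫ ω, ((X (n + 1) ⁻¹' B).indicator (fun _ => (1 : ℝ))) ω ∂P
        = (P (X (n + 1) ⁻¹' B)).toReal := by
      rw [integral_indicator hXB]
      simp
      rfl
    have e2 : ∫ ω, (p (X n ω) B).toReal ∂P = (P (X (n + 1) ⁻¹' B)).toReal := by
      rw [← e1, ← integral_condExp hle (f := (X (n + 1) ⁻¹' B).indicator fun _ => (1 : ℝ))]
      exact (integral_congr_ae hcn).symm
    have hmeasc : Measurable fun ω => p (X n ω) B :=
      (p.measurable_coe hB).comp (hXmeas n)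
    have e3 : ∫ ω, (p (X n ω) B).toReal ∂P
        = ((P.map (X n)).bind (fun x => p x) B).toReal := by
      rw [Measure.bind_apply hB p.measurable.aemeasurable,
        lintegral_map (p.measurable_coe hB) (hXmeas n),
        ← integral_toReal hmeasc.aemeasurable
          (Filter.Eventually.of_forall fun ω => measure_lt_top _ _)]
    have hfin1 : P (X (n + 1) ⁻¹' B) ≠ ⊤ := measure_ne_top _ _
    haveI : IsProbabilityMeasure (P.map (X n)) :=
      Measure.isProbabilityMeasure_map (hXmeas n).aemeasurable
    have hfin2 : (P.map (X n)).bind (fun x => p x) B ≠ ⊤ := by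
      rw [Measure.bind_apply hB p.measurable.aemeasurable]
      refine ((lintegral_mono fun x => prob_le_one).trans_lt ?_).ne
      rw [lintegral_one, measure_univ]
      exact ENNReal.one_lt_top
    rw [Measure.map_apply (hXmeas (n + 1)) hB]
    exact (ENNReal.toReal_eq_toReal_iff' hfin1 hfin2).mp (e2.symm.trans e3)
  -- second moment recursion
  have hΛ : ∀ k : ℕ,
      (∫⁻ y, ENNReal.ofReal ((y - ((k + 1 : ℕ) : ℝ) * m) ^ 2) ∂(P.map (X (k + 1))))
        = (k + 1 : ℕ) * ENNReal.ofReal L := by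
    intro k
    induction k with
    | zero =>
        rw [hX1]
        norm_num
        rw [← ofReal_integral_eq_lintegral_ofReal (hμintc m)
          (Filter.Eventually.of_forall fun t => sq_nonneg _), hμsq']
    | succ k ih =>
        have hmf : Measurable fun y : ℝ => ENNReal.ofReal ((y - ((k + 2 : ℕ) : ℝ) * m) ^ 2) :=
          ENNReal.measurable_ofReal.comp ((measurable_id.sub_const _).pow_const 2)
        rw [hbind (k + 1) (by omega), Measure.lintegral_bind p.measurable.aemeasurable hmf.aemeasurable]
        haveI : IsProbabilityMeasure (P.map (X (k + 1))) :=
          Measure.isProbabilityMeasure_map (hXmeas (k + 1)).aemeasurable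
        have hinner : ∀ x : ℝ,
            (∫⁻ y, ENNReal.ofReal ((y - ((k + 2 : ℕ) : ℝ) * m) ^ 2) ∂(p x))
              = ENNReal.ofReal ((x - ((k + 1 : ℕ) : ℝ) * m) ^ 2) + ENNReal.ofReal L := by
          intro x
          rw [← ofReal_integral_eq_lintegral_ofReal (hpintc x _)
            (Filter.Eventually.of_forall fun y => sq_nonneg _), hpsq',
            ← ENNReal.ofReal_add (sq_nonneg _) hL]
          congr 1
          push_cast
          ring
        calc (∫⁻ x, ∫⁻ y, ENNReal.ofReal ((y - ((k + 2 : ℕ) : ℝ) * m) ^ 2) ∂(p x)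
              ∂(P.map (X (k + 1))))
            = ∫⁻ x, (ENNReal.ofReal ((x - ((k + 1 : ℕ) : ℝ) * m) ^ 2) + ENNReal.ofReal L)
              ∂(P.map (X (k + 1))) := lintegral_congr hinner
          _ = (k + 1 : ℕ) * ENNReal.ofReal L + ENNReal.ofReal L := by
              rw [lintegral_add_right _ measurable_const, lintegral_const, measure_univ,
                mul_one, ih]
          _ = (k + 2 : ℕ) * ENNReal.ofReal L := by
              push_cast
              ring
  -- Chebyshev and conclusion
  rw [tendstoInMeasure_iff_dist]
  intro ε hε
  have hub : ∀ n : ℕ, 1 ≤ n →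
      P {ω | ε ≤ dist (X n ω / n) m} ≤ ENNReal.ofReal ((L / ε ^ 2) / n) := by
    intro n hn
    obtain ⟨k, rfl⟩ : ∃ k, n = k + 1 := ⟨n - 1, by omega⟩
    set n := k + 1
    have hnR : (0 : ℝ) < (n : ℝ) := by positivity
    have hsub : {ω | ε ≤ dist (X n ω / n) m}
        ⊆ {ω | ENNReal.ofReal ((n : ℝ) ^ 2 * ε ^ 2)
            ≤ ENNReal.ofReal ((X n ω - (n : ℝ) * m) ^ 2)} := by
      intro ω hω
      simp only [Set.mem_setOf_eq, Real.dist_eq] at hω ⊢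
      apply ENNReal.ofReal_le_ofReal
      have h1 : (n : ℝ) * ε ≤ |X n ω - (n : ℝ) * m| := by
        have : |X n ω / n - m| * n = |X n ω - (n : ℝ) * m| := by
          rw [← abs_of_pos hnR, ← abs_mul]
          congr 1
          field_simp
          rw [abs_of_pos hnR]
          ring
        calc (n : ℝ) * ε ≤ |X n ω / n - m| * n := by nlinarith
          _ = _ := this
      calc (n : ℝ) ^ 2 * ε ^ 2 = ((n : ℝ) * ε) ^ 2 := by ring
        _ ≤ |X n ω - (n : ℝ) * m| ^ 2 := by
            apply pow_le_pow_left₀ (by positivity) h1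
        _ = (X n ω - (n : ℝ) * m) ^ 2 := sq_abs _
    have hcheb : ENNReal.ofReal ((n : ℝ) ^ 2 * ε ^ 2) * P {ω | ε ≤ dist (X n ω / n) m}
        ≤ (n : ℕ) * ENNReal.ofReal L := by
      calc ENNReal.ofReal ((n : ℝ) ^ 2 * ε ^ 2) * P {ω | ε ≤ dist (X n ω / n) m}
          ≤ ENNReal.ofReal ((n : ℝ) ^ 2 * ε ^ 2)
            * P {ω | ENNReal.ofReal ((n : ℝ) ^ 2 * ε ^ 2)
                ≤ ENNReal.ofReal ((X n ω - (n : ℝ) * m) ^ 2)} := by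
            exact mul_le_mul_right (measure_mono hsub) _
        _ ≤ ∫⁻ ω, ENNReal.ofReal ((X n ω - (n : ℝ) * m) ^ 2) ∂P := by
            apply mul_meas_ge_le_lintegral₀
            exact (ENNReal.measurable_ofReal.comp
              (((hXmeas n).sub_const _).pow_const 2)).aemeasurable
        _ = ∫⁻ y, ENNReal.ofReal ((y - ((n : ℕ) : ℝ) * m) ^ 2) ∂(P.map (X n)) :=
            (lintegral_map (ENNReal.measurable_ofReal.comp
              ((measurable_id.sub_const _).pow_const 2)) (hXmeas n)).symm
        _ = (n : ℕ) * ENNReal.ofReal L := hΛ k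
    have key : ((n : ℕ) : ℝ≥0∞) * ENNReal.ofReal L
        = ENNReal.ofReal ((n : ℝ) ^ 2 * ε ^ 2) * ENNReal.ofReal ((L / ε ^ 2) / n) := by
      rw [← ENNReal.ofReal_natCast, ← ENNReal.ofReal_mul (by positivity),
        ← ENNReal.ofReal_mul (by positivity)]
      congr 1
      field_simp
    have hne : ENNReal.ofReal ((n : ℝ) ^ 2 * ε ^ 2) ≠ 0 :=
      (ENNReal.ofReal_pos.mpr (by positivity)).ne'
    exact (ENNReal.mul_le_mul_iff_right hne ENNReal.ofReal_ne_top).mp (key ▸ hcheb)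
  have hupper : Tendsto (fun n : ℕ => ENNReal.ofReal ((L / ε ^ 2) / n)) atTop (𝓝 0) := by
    have h0 := tendsto_const_div_atTop_nhds_zero_nat (L / ε ^ 2)
    have := (ENNReal.continuous_ofReal.tendsto 0).comp h0
    simpa [Function.comp_def] using this
  refine tendsto_of_tendsto_of_tendsto_of_le_of_le' tendsto_const_nhds hupper
    (Filter.Eventually.of_forall fun n => zero_le) ?_
  filter_upwards [Filter.eventually_ge_atTop 1] with n hn
  exact hub n hn
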